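/- Let Z be a metric space and T : Lip_bs(Z) → ℝ a linear functional such that ‖T‖ (defined from the masses M_V(T)) is a Borel outer measure finite on bounded sets. Then for every f ∈ Lip_bs(Z) with f ≥ 0, |T(f)| ≤ ∫_Z f d‖T‖. (Sketch: s ↦ T(min{f,s}) is Lipschitz with |d/ds T(f_s)| ≤ ‖T‖({f > s}‾) a.e., and integrate the layer-cake formula.) -/

import Mathlib

open Metric Filter MeasureTheory ENNReal Bornology

/-- Bounded-support Lipschitz real functions. -/
def LipBS {Z : Type*} [MetricSpace Z] (f : Z → ℝ) : Prop :=
  (∃ K : NNReal, LipschitzWith K f) ∧ IsBounded (tsupport f)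

/-- The mass of a `0`-dimensional functional in a set `V`. -/
noncomputable def mass0 {Z : Type*} [MetricSpace Z] (T : (Z → ℝ) → ℝ) (V : Set Z) : ℝ≥0∞ :=
  ⨆ f : {g : Z → ℝ // LipBS g ∧ tsupport g ⊆ V ∧ ∀ z, |g z| ≤ 1},
    ENNReal.ofReal (T f)

/-- The set function `‖T‖`. -/
noncomputable def normT0 {Z : Type*} [MetricSpace Z] (T : (Z → ℝ) → ℝ) (A : Set Z) : ℝ≥0∞ :=
  ⨅ (V : Set Z) (_ : IsOpen V ∧ A ⊆ V), mass0 T V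

section helpers
variable {Z : Type*} [MetricSpace Z]

lemma LipBS.smul {f : Z → ℝ} (hf : LipBS f) (c : ℝ) : LipBS (c • f) := by
  obtain ⟨⟨K, hK⟩, hb⟩ := hf
  refine ⟨⟨‖c‖₊ * K, ?_⟩, ?_⟩
  · exact (lipschitzWith_smul c).comp hK
  · exact hb.subset (closure_mono (Function.support_const_smul_subset c f))

lemma LipBS.neg {f : Z → ℝ} (hf : LipBS f) : LipBS (-f) := by
  have := hf.smul (-1)
  simpa using this

lemma lipBS_min_sub {f : Z → ℝ} (hf : LipBS f) {a b : ℝ} (ha : 0 ≤ a) (hb : 0 ≤ b) :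
    LipBS (fun z => min (f z) b - min (f z) a) := by
  obtain ⟨⟨K, hK⟩, hbd⟩ := hf
  refine ⟨⟨K + K, (hK.min_const b).sub (hK.min_const a)⟩, ?_⟩
  refine hbd.subset (closure_mono ?_)
  intro z hz
  simp only [Function.mem_support, ne_eq] at hz ⊢
  intro h0
  apply hz
  simp [h0, min_eq_left ha, min_eq_left hb]

lemma lipBS_min_const {f : Z → ℝ} (hf : LipBS f) {a : ℝ} (ha : 0 ≤ a) :
    LipBS (fun z => min (f z) a) := by
  obtain ⟨⟨K, hK⟩, hbd⟩ := hf
  refine ⟨⟨K, hK.min_const a⟩, ?_⟩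
  refine hbd.subset (closure_mono ?_)
  intro z hz
  simp only [Function.mem_support, ne_eq] at hz ⊢
  intro h0
  apply hz
  simp [h0, min_eq_left ha]

lemma mass_bound (T : (Z → ℝ) → ℝ)
    (hsmul : ∀ (c : ℝ) (f : Z → ℝ), LipBS f → T (c • f) = c * T f)
    {g : Z → ℝ} (hg : LipBS g) {δ : ℝ} (hδ : 0 < δ) (hgb : ∀ z, |g z| ≤ δ)
    {A : Set Z} (hA : tsupport g ⊆ A) :
    ENNReal.ofReal |T g| ≤ ENNReal.ofReal δ * normT0 T A := by
  have key : ∀ V : Set Z, IsOpen V ∧ A ⊆ V →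
      ENNReal.ofReal |T g| ≤ ENNReal.ofReal δ * mass0 T V := by
    intro V hV
    set h : Z → ℝ := δ⁻¹ • g with hh_def
    have hh : LipBS h := hg.smul δ⁻¹
    have hsupph : tsupport h ⊆ V := by
      refine (closure_mono (Function.support_const_smul_subset δ⁻¹ g)).trans (hA.trans hV.2)
    have hhb : ∀ z, |h z| ≤ 1 := by
      intro z
      simp only [hh_def, Pi.smul_apply, smul_eq_mul, abs_mul, abs_inv, abs_of_pos hδ]
      rw [inv_mul_le_iff₀ hδ, mul_one]
      exact hgb z
    have h1 : ENNReal.ofReal (T h) ≤ mass0 T V :=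
      le_iSup (fun f : {g : Z → ℝ // LipBS g ∧ tsupport g ⊆ V ∧ ∀ z, |g z| ≤ 1} =>
        ENNReal.ofReal (T f)) ⟨h, hh, hsupph, hhb⟩
    have hhneg : LipBS (-h) := hh.neg
    have hsuppneg : tsupport (-h) ⊆ V := by
      have : (-h) = (-1 : ℝ) • h := by funext z; simp
      rw [this]
      exact (closure_mono (Function.support_const_smul_subset (-1) h)).trans hsupph
    have hhnegb : ∀ z, |(-h) z| ≤ 1 := fun z => by simpa using hhb z
    have h2 : ENNReal.ofReal (T (-h)) ≤ mass0 T V :=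
      le_iSup (fun f : {g : Z → ℝ // LipBS g ∧ tsupport g ⊆ V ∧ ∀ z, |g z| ≤ 1} =>
        ENNReal.ofReal (T f)) ⟨-h, hhneg, hsuppneg, hhnegb⟩
    have hTneg : T (-h) = -T h := by
      have : (-h) = (-1 : ℝ) • h := by funext z; simp
      rw [this, hsmul (-1) h hh]; ring
    have habs : ENNReal.ofReal |T h| ≤ mass0 T V := by
      rcases abs_cases (T h) with ⟨he, _⟩ | ⟨he, _⟩
      · rw [he]; exact h1
      · rw [he, ← hTneg]; exact h2
    have hgh : g = δ • h := by
      funext z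
      simp [hh_def, mul_inv_cancel_left₀ hδ.ne']
    have : |T g| = δ * |T h| := by
      rw [hgh, hsmul δ h hh, abs_mul, abs_of_pos hδ]
    rw [this, ENNReal.ofReal_mul hδ.le]
    exact mul_le_mul_right habs _
  have hdiv : ENNReal.ofReal |T g| / ENNReal.ofReal δ ≤ normT0 T A := by
    refine le_iInf fun V => le_iInf fun hV => ?_
    exact ENNReal.div_le_of_le_mul (by rw [mul_comm]; exact key V hV)
  have hδ0 : ENNReal.ofReal δ ≠ 0 := by simp [hδ]
  have hδt : ENNReal.ofReal δ ≠ ⊤ := ENNReal.ofReal_ne_top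
  rw [mul_comm]
  exact (ENNReal.div_le_iff_le_mul (Or.inl hδ0) (Or.inl hδt)).mp hdiv

end helpers

/-- for a linear functional `T` on `Lip_bs(Z)` whose mass `‖T‖` is a Borel
outer measure finite on bounded sets, one has `|T(f)| ≤ ∫_Z f d‖T‖` for `f ≥ 0`. -/
theorem zero_dim_mass_bound {Z : Type*} [MetricSpace Z] [MeasurableSpace Z] [BorelSpace Z]
    (T : (Z → ℝ) → ℝ)
    (hadd : ∀ f g : Z → ℝ, LipBS f → LipBS g → T (f + g) = T f + T g)
    (hsmul : ∀ (c : ℝ) (f : Z → ℝ), LipBS f → T (c • f) = c * T f)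
    (μ : Measure Z) (hμ : ∀ s : Set Z, MeasurableSet s → μ s = normT0 T s)
    (hfin : ∀ s : Set Z, IsBounded s → μ s < ⊤)
    (f : Z → ℝ) (hf : LipBS f) (hf0 : ∀ z, 0 ≤ f z) :
    ENNReal.ofReal |T f| ≤ ∫⁻ z, ENNReal.ofReal (f z) ∂μ := by
  classical
  by_cases hfz : ∀ z, f z = 0
  · have hfe : f = (0:ℝ) • f := funext fun z => by simp [hfz z]
    have h0 : T f = 0 := by
      nth_rewrite 1 [hfe]
      rw [hsmul 0 f hf, zero_mul]
    simp [h0]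
  push_neg at hfz
  obtain ⟨z₀, hz₀⟩ := hfz
  obtain ⟨K, hK⟩ := hf.1
  have hfc : Continuous f := hK.continuous
  obtain ⟨r, hr⟩ := hf.2.subset_closedBall z₀
  set M : ℝ := f z₀ + (K:ℝ) * max r 0 with hM_def
  have hM0 : 0 ≤ M := add_nonneg (hf0 z₀) (mul_nonneg K.coe_nonneg (le_max_right r 0))
  have hM : ∀ z, f z ≤ M := by
    intro z
    by_cases hz : z ∈ tsupport f
    · have hd : dist z z₀ ≤ max r 0 := le_trans (mem_closedBall.mp (hr hz)) (le_max_left r 0)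
      calc f z = (f z - f z₀) + f z₀ := by ring
        _ ≤ |f z - f z₀| + f z₀ := add_le_add_left (le_abs_self _) _
        _ = dist (f z) (f z₀) + f z₀ := by rw [Real.dist_eq]
        _ ≤ (K:ℝ) * dist z z₀ + f z₀ := add_le_add_left (hK.dist_le_mul z z₀) _
        _ ≤ (K:ℝ) * max r 0 + f z₀ := add_le_add_left
            (mul_le_mul_of_nonneg_left hd K.coe_nonneg) _
        _ = M := by rw [hM_def]; ring
    · rw [image_eq_zero_of_notMem_tsupport hz]; exact hM0
  set C := μ (tsupport f) with hC_def
  have hC : C < ⊤ := hfin _ hf.2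
  have main : ∀ δ : ℝ, 0 < δ →
      ENNReal.ofReal |T f| ≤ (∫⁻ z, ENNReal.ofReal (f z) ∂μ) + ENNReal.ofReal δ * C := by
    intro δ hδ
    obtain ⟨n₀, hn₀⟩ : ∃ n : ℕ, M ≤ (n:ℝ) * δ :=
      ⟨⌈M / δ⌉₊, (div_le_iff₀ hδ).mp (Nat.le_ceil _)⟩
    set g : ℕ → Z → ℝ := fun i z => min (f z) (((i:ℝ)+1)*δ) - min (f z) ((i:ℝ)*δ) with hg_def
    set F : ℕ → Z → ℝ := fun n z => min (f z) ((n:ℝ)*δ) with hF_def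
    have hinonneg : ∀ i : ℕ, (0:ℝ) ≤ (i:ℝ)*δ := fun i => mul_nonneg (Nat.cast_nonneg i) hδ.le
    have hi1nonneg : ∀ i : ℕ, (0:ℝ) ≤ ((i:ℝ)+1)*δ := fun i => mul_nonneg (by positivity) hδ.le
    have hstep : ∀ i : ℕ, (i:ℝ)*δ ≤ ((i:ℝ)+1)*δ := fun i => by nlinarith
    have hglip : ∀ i, LipBS (g i) := fun i => lipBS_min_sub hf (hinonneg i) (hi1nonneg i)
    have hFlip : ∀ n, LipBS (F n) := fun n => lipBS_min_const hf (hinonneg n)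
    have hmono : ∀ (i : ℕ) z, min (f z) ((i:ℝ)*δ) ≤ min (f z) (((i:ℝ)+1)*δ) :=
      fun i z => min_le_min le_rfl (hstep i)
    have hg0 : ∀ i z, 0 ≤ g i z := fun i z => sub_nonneg.2 (hmono i z)
    have hgδ : ∀ i z, g i z ≤ δ := by
      intro i z
      rcases le_total (f z) ((i:ℝ)*δ) with h | h
      · have h2 : f z ≤ ((i:ℝ)+1)*δ := le_trans h (hstep i)
        simp only [hg_def]
        rw [min_eq_left h2, min_eq_left h]
        linarith
      · simp only [hg_def]
        rw [min_eq_right h]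
        have := min_le_right (f z) (((i:ℝ)+1)*δ)
        linarith
    have hgabs : ∀ i z, |g i z| ≤ δ := fun i z =>
      abs_le.2 ⟨by linarith [hg0 i z, hδ.le], hgδ i z⟩
    set A : ℕ → Set Z := fun i => tsupport f ∩ closure {z | (i:ℝ)*δ < f z} with hA_def
    have hAclosed : ∀ i, IsClosed (A i) := fun _ => (isClosed_tsupport f).inter isClosed_closure
    have hsuppg : ∀ i, tsupport (g i) ⊆ A i := by
      intro i
      have hsub : Function.support (g i) ⊆ Function.support f ∩ {z | (i:ℝ)*δ < f z} := by
        intro z hz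
        simp only [Function.mem_support, ne_eq] at hz
        have hlt : (i:ℝ)*δ < f z := by
          by_contra hle
          push_neg at hle
          apply hz
          have h2 : f z ≤ ((i:ℝ)+1)*δ := le_trans hle (hstep i)
          simp only [hg_def]
          rw [min_eq_left hle, min_eq_left h2, sub_self]
        refine ⟨?_, hlt⟩
        simp only [Function.mem_support, ne_eq]
        intro h0
        rw [h0] at hlt
        exact absurd hlt (not_lt.mpr (hinonneg i))
      calc tsupport (g i) ⊆ closure (Function.support f ∩ {z | (i:ℝ)*δ < f z}) :=
            closure_mono hsub
        _ ⊆ closure (Function.support f) ∩ closure {z | (i:ℝ)*δ < f z} :=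
            closure_inter_subset_inter_closure _ _
        _ = A i := rfl
    have hTgi : ∀ i, ENNReal.ofReal |T (g i)| ≤ ENNReal.ofReal δ * μ (A i) := by
      intro i
      have h := mass_bound T hsmul (hglip i) hδ (hgabs i) (hsuppg i)
      rwa [← hμ (A i) (hAclosed i).measurableSet] at h
    have hFg : ∀ n : ℕ, F (n+1) = F n + g n := by
      intro n; funext z
      simp only [hF_def, hg_def, Pi.add_apply]
      push_cast
      ring
    have hF0 : T (F 0) = 0 := by
      have hFe : F 0 = (0:ℝ) • f := by
        funext z
        simp [hF_def, min_eq_right (hf0 z)]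
      rw [hFe, hsmul 0 f hf, zero_mul]
    have hTF : ∀ n : ℕ, ENNReal.ofReal |T (F n)| ≤
        ∑ i ∈ Finset.range n, ENNReal.ofReal |T (g i)| := by
      intro n
      induction n with
      | zero => simp [hF0]
      | succ n ih =>
        rw [hFg n, hadd _ _ (hFlip n) (hglip n), Finset.sum_range_succ]
        calc ENNReal.ofReal |T (F n) + T (g n)|
            ≤ ENNReal.ofReal (|T (F n)| + |T (g n)|) :=
              ENNReal.ofReal_le_ofReal (abs_add_le _ _)
          _ = ENNReal.ofReal |T (F n)| + ENNReal.ofReal |T (g n)| :=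
              ENNReal.ofReal_add (abs_nonneg _) (abs_nonneg _)
          _ ≤ _ := add_le_add ih le_rfl
    have hFN : F (n₀+1) = f := by
      funext z
      simp only [hF_def]
      refine min_eq_left ?_
      have : ((n₀:ℝ)) * δ ≤ ((n₀+1:ℕ):ℝ) * δ := by push_cast; nlinarith
      linarith [hM z, hn₀]
    have hA0 : μ (A 0) ≤ C := measure_mono Set.inter_subset_left
    have hAi : ∀ i : ℕ, ENNReal.ofReal δ * μ (A (i+1)) ≤ ∫⁻ z, ENNReal.ofReal (g i z) ∂μ := by
      intro i
      set S : Set Z := {z | ((i:ℝ)+1)*δ ≤ f z} with hS_def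
      have hSclosed : IsClosed S := isClosed_le continuous_const hfc
      have hAS : A (i+1) ⊆ S := by
        refine Set.inter_subset_right.trans (closure_minimal ?_ hSclosed)
        intro z hz
        simp only [Set.mem_setOf_eq] at hz
        push_cast at hz
        simp only [hS_def, Set.mem_setOf_eq]
        linarith
      have h1 : μ (A (i+1)) ≤ μ S := measure_mono hAS
      have h2 : ENNReal.ofReal δ * μ S ≤ ∫⁻ z, ENNReal.ofReal (g i z) ∂μ := by
        rw [← lintegral_indicator_const hSclosed.measurableSet]
        refine lintegral_mono fun z => ?_
        by_cases hz : z ∈ S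
        · rw [Set.indicator_of_mem hz]
          apply ENNReal.ofReal_le_ofReal
          have h3 : ((i:ℝ)+1)*δ ≤ f z := hz
          have h4 : (i:ℝ)*δ ≤ f z := le_trans (hstep i) h3
          simp only [hg_def]
          rw [min_eq_right h3, min_eq_right h4]
          linarith
        · rw [Set.indicator_of_notMem hz]; exact zero_le
      calc ENNReal.ofReal δ * μ (A (i+1)) ≤ ENNReal.ofReal δ * μ S := mul_le_mul_right h1 _
        _ ≤ _ := h2
    have hmeasg : ∀ i, Measurable fun z => ENNReal.ofReal (g i z) := by
      intro i
      have hc : Continuous (g i) := by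
        simp only [hg_def]
        exact (hfc.min continuous_const).sub (hfc.min continuous_const)
      exact hc.measurable.ennreal_ofReal
    have hsum_g : ∀ n : ℕ, ∑ i ∈ Finset.range n, (∫⁻ z, ENNReal.ofReal (g i z) ∂μ) ≤
        ∫⁻ z, ENNReal.ofReal (f z) ∂μ := by
      intro n
      rw [← lintegral_finset_sum _ (fun i _ => hmeasg i)]
      refine lintegral_mono fun z => ?_
      rw [← ENNReal.ofReal_sum_of_nonneg (fun i _ => hg0 i z)]
      apply ENNReal.ofReal_le_ofReal
      have htel : ∑ i ∈ Finset.range n, g i z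
          = min (f z) ((n:ℝ)*δ) - min (f z) (((0:ℕ):ℝ)*δ) := by
        have h := Finset.sum_range_sub (f := fun i : ℕ => min (f z) ((i:ℝ)*δ)) n
        rw [← h]
        refine Finset.sum_congr rfl fun i _ => ?_
        simp only [hg_def]
        push_cast
        ring_nf
      rw [htel]
      have h0 : min (f z) (((0:ℕ):ℝ)*δ) = 0 := by
        simp [min_eq_right (hf0 z)]
      rw [h0, sub_zero]
      exact min_le_left _ _
    calc ENNReal.ofReal |T f|
        = ENNReal.ofReal |T (F (n₀+1))| := by rw [hFN]
      _ ≤ ∑ i ∈ Finset.range (n₀+1), ENNReal.ofReal |T (g i)| := hTF (n₀+1)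
      _ ≤ ∑ i ∈ Finset.range (n₀+1), ENNReal.ofReal δ * μ (A i) :=
          Finset.sum_le_sum fun i _ => hTgi i
      _ = (∑ i ∈ Finset.range n₀, ENNReal.ofReal δ * μ (A (i+1))) + ENNReal.ofReal δ * μ (A 0) :=
          Finset.sum_range_succ' _ _
      _ ≤ (∑ i ∈ Finset.range n₀, ∫⁻ z, ENNReal.ofReal (g i z) ∂μ) + ENNReal.ofReal δ * C :=
          add_le_add (Finset.sum_le_sum fun i _ => hAi i) (mul_le_mul_right hA0 _)
      _ ≤ (∫⁻ z, ENNReal.ofReal (f z) ∂μ) + ENNReal.ofReal δ * C :=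
          add_le_add (hsum_g _) le_rfl
  refine ENNReal.le_of_forall_pos_le_add fun ε hε _ => ?_
  rcases eq_or_ne C 0 with hC0 | hC0
  · have h := main 1 one_pos
    rw [hC0, mul_zero, add_zero] at h
    exact h.trans le_self_add
  · have hCt : C ≠ ⊤ := hC.ne
    have hCpos : 0 < C.toReal := ENNReal.toReal_pos hC0 hCt
    set δ : ℝ := (ε : ℝ) / C.toReal with hδ_def
    have hδpos : 0 < δ := div_pos (by exact_mod_cast hε) hCpos
    have h := main δ hδpos
    have heq : ENNReal.ofReal δ * C = (ε : ℝ≥0∞) := by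
      conv_lhs => rw [← ENNReal.ofReal_toReal hCt]
      rw [← ENNReal.ofReal_mul hδpos.le, hδ_def, div_mul_cancel₀ _ hCpos.ne']
      exact ENNReal.ofReal_coe_nnreal
    rw [heq] at h
    exact h
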